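/- arXiv:1602.06479 — 7 statements merged into one kernel-verified Lean document; each statement's English description precedes it below -/
import Mathlib

section
/- The transformations t_k = μ_k∘μ_k satisfy the braid relations: t_j∘t_k = t_k∘t_j if (e_j,e_k) = 0, and t_j∘t_k∘t_j = t_k∘t_j∘t_k if (e_j,e_k) = ±1. -/
/-- The transformations `t_k = μ_k ∘ μ_k`, acting on a lattice `Λ` with skew-symmetric
ℤ-bilinear form by `t_k(x) = x + (x,e_k)·e_k`, satisfy the braid relations:
`t_j ∘ t_k = t_k ∘ t_j` if `(e_j,e_k) = 0`, and
`t_j ∘ t_k ∘ t_j = t_k ∘ t_j ∘ t_k` if `(e_j,e_k) = ±1`. -/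
theorem stmt_6 {I Λ : Type*} [AddCommGroup Λ]
    (form : Λ →ₗ[ℤ] Λ →ₗ[ℤ] ℤ) (hskew : ∀ a b : Λ, form a b = - form b a)
    (e : I → Λ) (t : I → Λ → Λ)
    (ht : ∀ k x, t k x = x + (form x (e k)) • e k) (j k : I) :
    (form (e j) (e k) = 0 → ∀ x, t j (t k x) = t k (t j x)) ∧
    ((form (e j) (e k) = 1 ∨ form (e j) (e k) = -1) →
      ∀ x, t j (t k (t j x)) = t k (t j (t k x))) := by
  have hself : ∀ a : Λ, form a a = 0 := fun a => by have := hskew a a; omega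
  have hkj : form (e k) (e j) = - form (e j) (e k) := hskew _ _
  constructor
  · intro hc x
    simp only [ht, map_add, map_smul, LinearMap.add_apply, LinearMap.smul_apply,
      smul_eq_mul, hself, hkj, hc]
    module
  · intro hc x
    rcases hc with h | h <;>
      simp only [ht, map_add, map_smul, LinearMap.add_apply, LinearMap.smul_apply,
        smul_eq_mul, hself, hkj, h] <;> module
end

section
/- The C-matrix of a mutation composed with a cluster transformation is given by: if C_σ has rows c_i and ε' is the exchange matrix at the target, then the rows of C_{μ_k∘σ} are c'_k = −c_k and c'_i = c_i + [sgn(c_k)·ε'_{ik}]_+ · c_k for i ≠ k, assuming each row c_k is sign-coherent (all entries of the same sign). -/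
/-- Mutation rule for C-matrices.  Let `c` be the C-matrix of a cluster transformation
`σ` (rows `c_i`), `ε'` the exchange matrix at the target, and suppose the row `c_k` is
sign-coherent with common sign `s ∈ {±1}` (with `s = 1` allowed when the row vanishes).
Then the rows of the C-matrix of `μ_k ∘ σ`, given componentwise by the tropical rule
`c'_{ij} = c_{ij} - ε'_{ik}·min(0, -sgn(ε'_{ik})·c_{kj})` (and `c'_k = -c_k`),
satisfy `c'_k = -c_k` and `c'_i = c_i + [s·ε'_{ik}]₊ · c_k` for `i ≠ k`. -/
theorem stmt_8 {I : Type*} [DecidableEq I]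
    (c ε' : I → I → ℤ) (k : I)
    (s : ℤ) (hs : s = 1 ∨ s = -1) (hcoh : ∀ j, 0 ≤ s * c k j)
    (c' : I → I → ℤ)
    (hc' : ∀ i j, c' i j = if i = k then - c k j
      else c i j - ε' i k * min 0 (-(ε' i k).sign * c k j)) :
    ∀ i j, c' i j = if i = k then - c k j
      else c i j + max (s * ε' i k) 0 * c k j := by
  intro i j
  rw [hc' i j]
  by_cases h : i = k
  · simp [h]
  · simp only [if_neg h]
    have hx := hcoh j
    set e := ε' i k with he
    set x := c k j with hxdef
    have key : -(e * min 0 (-e.sign * x)) = max (s * e) 0 * x := by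
      rcases lt_trichotomy e 0 with h1 | h1 | h1
      · rw [Int.sign_eq_neg_one_of_neg h1]
        rcases hs with rfl | rfl
        · have hx' : 0 ≤ x := by linarith
          rw [min_eq_left (by nlinarith), max_eq_right (by nlinarith)]
          ring
        · have hx' : x ≤ 0 := by linarith
          rw [min_eq_right (by nlinarith), max_eq_left (by nlinarith)]
          ring
      · simp [h1]
      · rw [Int.sign_eq_one_of_pos h1]
        rcases hs with rfl | rfl
        · have hx' : 0 ≤ x := by linarith
          rw [min_eq_right (by nlinarith), max_eq_left (by nlinarith)]
          ring
        · have hx' : x ≤ 0 := by linarith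
          rw [min_eq_left (by nlinarith), max_eq_right (by nlinarith)]
          ring
    linarith [key]
end

section
/- Let D be the N×N matrix with D_{ij} = 0 for j ≠ k, D_{ik} = [−ε_{ik}]_+ for j = k, i ≠ k, and D_{kk} = 2. Then D² = 2D, and consequently (−Id + D)² = Id. -/
/-- Let `ε` be a skew-symmetric integer matrix and `k` a fixed index.  Let `D` be the
matrix with `D_{ij} = 0` for `j ≠ k`, `D_{ik} = [-ε_{ik}]₊` for `j = k, i ≠ k`, and
`D_{kk} = 2`.  Then `D² = 2D`, and consequently `(-Id + D)² = Id`. -/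
theorem stmt_10 {I : Type*} [Fintype I] [DecidableEq I]
    (ε : I → I → ℤ) (hskew : ∀ i j, ε i j = - ε j i) (k : I)
    (D : Matrix I I ℤ)
    (hD : ∀ i j, D i j = if j = k then (if i = k then 2 else max (-(ε i k)) 0) else 0) :
    D * D = 2 • D ∧ (-1 + D) * (-1 + D) = 1 := by
  have hsq : D * D = 2 • D := by
    ext i j
    rw [Matrix.mul_apply]
    have : ∀ m : I, D i m * D m j = if m = k then D i k * D k j else 0 := by
      intro m
      by_cases hm : m = k
      · simp [hm]
      · simp [hD i m, hm]
    rw [Finset.sum_congr rfl (fun m _ => this m), Finset.sum_ite_eq']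
    simp only [Finset.mem_univ, if_true]
    simp only [Matrix.smul_apply, hD i j]
    by_cases hj : j = k <;> simp [hj, hD, mul_comm]
  refine ⟨hsq, ?_⟩
  have : (-1 + D) * (-1 + D) = 1 - D - D + D * D := by noncomm_ring
  rw [this, hsq]
  rw [two_smul]
  abel
end

section
/- If σ is a reddening cluster transformation (all entries of C_σ are ≤ 0), then the inverse transformation F(σ) is also reddening, i.e. all entries of C_{F(σ)} = C_σ^{-1} are ≤ 0. (Given: C_{F(σ)}·C_σ = Id and the sign-coherence of C-matrix rows.) -/
/-- If `σ` is a reddening cluster transformation (all entries of its C-matrix `C` are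
`≤ 0`), then the contravariant dual `F(σ)` is also reddening: its C-matrix `D`, which
satisfies `D·C = Id` (Nakanishi–Zelevinsky) and whose rows are sign-coherent, has all
entries `≤ 0`. -/
theorem stmt_11 {I : Type*} [Fintype I] [DecidableEq I]
    (C D : Matrix I I ℤ) (hDC : D * C = 1)
    (hC : ∀ i j, C i j ≤ 0)
    (hcoh : ∀ i, (∀ j, 0 ≤ D i j) ∨ (∀ j, D i j ≤ 0)) :
    ∀ i j, D i j ≤ 0 := by
  intro i j
  rcases hcoh i with hpos | hneg
  · exfalso
    have h1 : (D * C) i i = 1 := by rw [hDC]; simp [Matrix.one_apply]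
    rw [Matrix.mul_apply] at h1
    have hle : (∑ k, D i k * C k i) ≤ 0 :=
      Finset.sum_nonpos fun k _ => mul_nonpos_of_nonneg_of_nonpos (hpos k) (hC k i)
    omega
  · exact hneg j
end

section
/- Let C be an invertible integer N×N matrix with all entries nonpositive, and let D = C^{-1} have sign-coherent rows (each row all ≥ 0 or all ≤ 0). Then there exists a unique permutation π of {1,…,N} such that for each i, the i-th row of D is −e_{π(i)} and the π(i)-th row of C is −e_i; in particular the matrix obtained from C by permuting rows via π is −Id. -/
/-- Let `C` be an invertible integer matrix with all entries nonpositive, and let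
`D = C⁻¹` (so `D·C = Id`) have sign-coherent rows.  Then there is a unique permutation
`π` such that for each `i` the `i`-th row of `D` is `-e_{π(i)}` and the `π(i)`-th row of
`C` is `-e_i`; in particular, permuting the rows of `C` by `π` yields `-Id`. -/
theorem stmt_12 {I : Type*} [Fintype I] [DecidableEq I]
    (C D : Matrix I I ℤ) (hDC : D * C = 1)
    (hC : ∀ i j, C i j ≤ 0)
    (hcoh : ∀ i, (∀ j, 0 ≤ D i j) ∨ (∀ j, D i j ≤ 0)) :
    ∃! π : Equiv.Perm I,
      (∀ i j, D i j = if j = π i then -1 else 0) ∧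
      (∀ i j, C (π i) j = if j = i then -1 else 0) ∧
      C.submatrix (⇑π) id = -1 := by
  have hCD : C * D = 1 := mul_eq_one_comm.mp hDC
  -- D is entrywise nonpositive
  have hD : ∀ i j, D i j ≤ 0 := by
    intro i j
    rcases hcoh i with h | h
    · exfalso
      have h1 : (D * C) i i = 1 := by rw [hDC, Matrix.one_apply_eq]
      rw [Matrix.mul_apply] at h1
      have h2 : ∑ k, D i k * C k i ≤ 0 :=
        Finset.sum_nonpos fun k _ => mul_nonpos_iff.mpr (Or.inl ⟨h k, hC k i⟩)
      linarith
    · exact h j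
  have hterm : ∀ i j k, 0 ≤ D i k * C k j :=
    fun i j k => mul_nonneg_iff.mpr (Or.inr ⟨hD i k, hC k j⟩)
  -- pick a nonzero entry in each row of D
  have hex : ∀ i, ∃ k, D i k ≠ 0 ∧ C k i ≠ 0 := by
    intro i
    by_contra h
    push_neg at h
    have h1 : (D * C) i i = 1 := by rw [hDC, Matrix.one_apply_eq]
    rw [Matrix.mul_apply] at h1
    have h2 : ∑ k, D i k * C k i = 0 := Finset.sum_eq_zero (by
      intro k _
      by_cases hk : D i k = 0
      · rw [hk, zero_mul]
      · rw [h k hk, mul_zero])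
    omega
  choose f hf1 _ using hex
  -- off-diagonal part of row (f i) of C vanishes
  have hCoff : ∀ i j, j ≠ i → C (f i) j = 0 := by
    intro i j hj
    have h0 : (D * C) i j = 0 := by
      rw [hDC]; exact Matrix.one_apply_ne (Ne.symm hj)
    rw [Matrix.mul_apply] at h0
    have := (Finset.sum_eq_zero_iff_of_nonneg (fun k _ => hterm i j k)).mp h0
      (f i) (Finset.mem_univ _)
    rcases mul_eq_zero.mp this with h | h
    · exact absurd h (hf1 i)
    · exact h
  have hCD' : ∀ i j, C (f i) i * D i j = if f i = j then 1 else 0 := by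
    intro i j
    have h1 : (C * D) (f i) j = if f i = j then 1 else 0 := by
      rw [hCD, Matrix.one_apply]
    rw [Matrix.mul_apply] at h1
    have h2 : ∑ l, C (f i) l * D l j = C (f i) i * D i j :=
      Finset.sum_eq_single i (fun l _ hl => by rw [hCoff i l hl, zero_mul])
        (fun h => absurd (Finset.mem_univ i) h)
    rw [← h1, h2]
  have hCdiag : ∀ i, C (f i) i = -1 := by
    intro i
    have h := hCD' i (f i)
    rw [if_pos rfl] at h
    rcases Int.mul_eq_one_iff_eq_one_or_neg_one.mp h with ⟨h1, _⟩ | ⟨h1, _⟩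
    · have := hC (f i) i; omega
    · exact h1
  have hDrow : ∀ i j, D i j = if j = f i then -1 else 0 := by
    intro i j
    have h := hCD' i j
    rw [hCdiag i] at h
    by_cases hj : j = f i
    · subst hj; rw [if_pos rfl] at h ⊢; linarith
    · rw [if_neg (Ne.symm hj)] at h; rw [if_neg hj]; linarith
  have hCrow : ∀ i j, C (f i) j = if j = i then -1 else 0 := by
    intro i j
    by_cases hj : j = i
    · subst hj; rw [if_pos rfl]; exact hCdiag j
    · rw [if_neg hj]; exact hCoff i j hj
  have finj : Function.Injective f := by
    intro a b hab
    by_contra hne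
    have h1 : C (f a) b = 0 := hCoff a b (Ne.symm hne)
    have h2 : C (f b) b = -1 := hCdiag b
    rw [← hab] at h2
    omega
  refine ⟨Equiv.ofBijective f (Finite.injective_iff_bijective.mp finj),
    ⟨fun i j => hDrow i j, fun i j => hCrow i j, ?_⟩, ?_⟩
  · ext i j
    simp only [Matrix.submatrix_apply, id, Matrix.neg_apply, Matrix.one_apply,
      Equiv.ofBijective_apply]
    rw [hCrow i j]
    by_cases h : j = i
    · subst h; simp
    · rw [if_neg h, if_neg (Ne.symm h), neg_zero]
  · rintro π' ⟨hπ'D, -, -⟩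
    ext i
    have h := hπ'D i (π' i)
    rw [if_pos rfl] at h
    have h2 := hDrow i (π' i)
    rw [h] at h2
    show π' i = f i
    by_cases hc : π' i = f i
    · exact hc
    · rw [if_neg hc] at h2; omega
end

section
/- Let C be an invertible integer N×N matrix with all entries nonnegative, such that the rows of C^{-1} are sign-coherent. Then C is a permutation matrix. -/
/-- Let `C` be an invertible integer matrix with all entries nonnegative, such that the
rows of `C⁻¹` (the matrix `D` with `D·C = Id`) are sign-coherent.  Then `C` is a
permutation matrix. -/
theorem stmt_13 {I : Type*} [Fintype I] [DecidableEq I]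
    (C D : Matrix I I ℤ) (hDC : D * C = 1)
    (hC : ∀ i j, 0 ≤ C i j)
    (hcoh : ∀ i, (∀ j, 0 ≤ D i j) ∨ (∀ j, D i j ≤ 0)) :
    ∃ π : Equiv.Perm I, ∀ i j, C i j = if π i = j then 1 else 0 := by
  have hDCa : ∀ i j, ∑ k, D i k * C k j = if i = j then 1 else 0 := by
    intro i j
    have := congrFun (congrFun hDC i) j
    simpa [Matrix.mul_apply, Matrix.one_apply] using this
  have hD : ∀ i k, 0 ≤ D i k := by
    intro i k
    rcases hcoh i with h | h
    · exact h k
    · exfalso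
      have h1 : ∑ k, D i k * C k i = 1 := by simpa using hDCa i i
      have h2 : ∑ k, D i k * C k i ≤ 0 :=
        Finset.sum_nonpos fun k _ => mul_nonpos_of_nonpos_of_nonneg (h k) (hC k i)
      linarith
  have hCD : C * D = 1 := mul_eq_one_comm.mp hDC
  have hCDa : ∀ i j, ∑ k, C i k * D k j = if i = j then 1 else 0 := by
    intro i j
    have := congrFun (congrFun hCD i) j
    simpa [Matrix.mul_apply, Matrix.one_apply] using this
  have key : ∀ i, ∃ j, C i j = 1 ∧ D j i = 1 ∧ ∀ j', j' ≠ j → C i j' = 0 := by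
    intro i
    have h1 : ∑ k, C i k * D k i = 1 := by simpa using hCDa i i
    have hpos : ∃ j, 0 < C i j * D j i := by
      by_contra h
      push_neg at h
      have : ∑ k, C i k * D k i ≤ 0 := Finset.sum_nonpos fun k _ => h k
      linarith
    obtain ⟨j, hj⟩ := hpos
    have hle : C i j * D j i ≤ 1 := by
      rw [← h1]
      exact Finset.single_le_sum (f := fun k => C i k * D k i)
        (fun k _ => mul_nonneg (hC i k) (hD k i)) (Finset.mem_univ j)
    have heq : C i j * D j i = 1 := le_antisymm hle hj
    have hCij : C i j = 1 := Int.eq_one_of_mul_eq_one_right (hC i j) heq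
    have hDji : D j i = 1 := by
      rw [hCij, one_mul] at heq
      exact heq
    refine ⟨j, hCij, hDji, ?_⟩
    intro j' hj'
    have h0 : ∑ k, D j k * C k j' = 0 := by
      rw [hDCa j j', if_neg (fun h => hj' h.symm)]
    have hub : D j i * C i j' ≤ 0 := by
      rw [← h0]
      exact Finset.single_le_sum (f := fun k => D j k * C k j')
        (fun k _ => mul_nonneg (hD j k) (hC k j')) (Finset.mem_univ i)
    rw [hDji, one_mul] at hub
    exact le_antisymm hub (hC i j')
  choose f hf1 hf2 hf3 using key
  have hinj : Function.Injective f := by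
    intro i i' hii'
    by_contra hne
    have h0 : ∑ k, C i k * D k i' = 0 := by rw [hCDa i i', if_neg hne]
    have hsum : ∑ k, C i k * D k i' = 1 := by
      rw [Finset.sum_eq_single (f i)]
      · rw [hf1 i, one_mul, hii', hf2 i']
      · intro k _ hk
        rw [hf3 i k hk, zero_mul]
      · intro h; exact absurd (Finset.mem_univ _) h
    linarith
  have hbij : Function.Bijective f := Finite.injective_iff_bijective.mp hinj
  refine ⟨Equiv.ofBijective f hbij, fun i j => ?_⟩
  simp only [Equiv.ofBijective_apply]
  by_cases h : f i = j
  · rw [if_pos h, ← h, hf1 i]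
  · rw [if_neg h, hf3 i j (fun hh => h hh.symm)]
end

section
/- For a triple of complete flags (F•, G•, H•) in a 3-dimensional vector space V in generic position, the triple ratio r₃⁺(F•,G•,H•) = (⟨f₁∧g₂,ω⟩⟨g₁∧h₂,ω⟩⟨h₁∧f₂,ω⟩)/(⟨f₁∧h₂,ω⟩⟨g₁∧f₂,ω⟩⟨h₁∧g₂,ω⟩) equals the cross-ratio r⁺(L₁,L₂,L₃,L₄) of the four lines L₁=F₁, L₂=G₂∩F₂, L₃=(G₁⊕H₁)∩F₂, L₄=H₂∩F₂ inside the plane F₂. -/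
set_option linter.unusedSectionVars false
section helpers
variable {F V : Type*} [Field F] [AddCommGroup V] [Module F V]
variable (ω : AlternatingMap F V F (Fin 3))

private lemma upd0' (w x y z : V) : Function.update ![z, x, y] 0 w = ![w, x, y] := by
  ext i; fin_cases i <;> simp

private lemma upd1' (w x y z : V) : Function.update ![w, z, y] 1 x = ![w, x, y] := by
  ext i; fin_cases i <;> simp

private lemma upd2' (w x y z : V) : Function.update ![w, x, z] 2 y = ![w, x, y] := by
  ext i; fin_cases i <;> simp

private lemma lin0 (a b y z : V) (α β : F) :
    ω ![α•a+β•b, y, z] = α * ω ![a,y,z] + β * ω ![b,y,z] := by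
  rw [← upd0' (α•a+β•b) y z 0, ω.map_update_add, ω.map_update_smul, ω.map_update_smul,
    upd0', upd0', smul_eq_mul, smul_eq_mul]

private lemma lin1 (w a b y : V) (α β : F) :
    ω ![w, α•a+β•b, y] = α * ω ![w,a,y] + β * ω ![w,b,y] := by
  rw [← upd1' w (α•a+β•b) y 0, ω.map_update_add, ω.map_update_smul, ω.map_update_smul,
    upd1', upd1', smul_eq_mul, smul_eq_mul]

private lemma lin2 (w x a b : V) (α β : F) :
    ω ![w, x, α•a+β•b] = α * ω ![w,x,a] + β * ω ![w,x,b] := by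
  rw [← upd2' w x (α•a+β•b) 0, ω.map_update_add, ω.map_update_smul, ω.map_update_smul,
    upd2', upd2', smul_eq_mul, smul_eq_mul]

private lemma expand3 (w a b c d : V) (α β γ δ : F) :
    ω ![w, α•a+β•b, γ•c+δ•d] =
      α*γ*ω ![w,a,c] + α*δ*ω ![w,a,d] + β*γ*ω ![w,b,c] + β*δ*ω ![w,b,d] := by
  rw [lin1, lin2, lin2]; ring

private lemma z01 (x w : V) : ω ![x, x, w] = 0 :=
  ω.map_eq_zero_of_eq _ (show ![x,x,w] 0 = ![x,x,w] 1 from rfl) (by decide)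

private lemma z02 (x w : V) : ω ![x, w, x] = 0 :=
  ω.map_eq_zero_of_eq _ (show ![x,w,x] 0 = ![x,w,x] 2 from rfl) (by decide)

private lemma z12 (w x : V) : ω ![w, x, x] = 0 :=
  ω.map_eq_zero_of_eq _ (show ![w,x,x] 1 = ![w,x,x] 2 from rfl) (by decide)

private lemma sw01 (x y z : V) : ω ![y, x, z] = - ω ![x, y, z] := by
  have h := ω.map_swap (v := ![x,y,z]) (show (0:Fin 3) ≠ 1 by decide)
  have hc : ![x,y,z] ∘ Equiv.swap (0:Fin 3) 1 = ![y,x,z] := by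
    ext i; fin_cases i <;> simp [Equiv.swap_apply_def]
  rwa [hc] at h

private lemma sw12 (x y z : V) : ω ![x, z, y] = - ω ![x, y, z] := by
  have h := ω.map_swap (v := ![x,y,z]) (show (1:Fin 3) ≠ 2 by decide)
  have hc : ![x,y,z] ∘ Equiv.swap (1:Fin 3) 2 = ![x,z,y] := by
    ext i; fin_cases i <;> simp [Equiv.swap_apply_def]
  rwa [hc] at h

end helpers

/-- For a generic triple of complete flags `(F•, G•, H•)` in a 3-dimensional vector space
`V` with volume form `ω`, presented by vectors `F₁ = ⟨f₁⟩ ⊂ F₂ = ⟨f₁,f₂⟩`, etc., the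
triple ratio
`r₃⁺ = (⟨f₁∧g₂,ω⟩⟨g₁∧h₂,ω⟩⟨h₁∧f₂,ω⟩) / (⟨f₁∧h₂,ω⟩⟨g₁∧f₂,ω⟩⟨h₁∧g₂,ω⟩)`
(with the decoration of each 2-plane given by the wedge of its two spanning vectors)
equals the cross-ratio `r⁺(L₁,L₂,L₃,L₄)` of the four lines
`L₁ = F₁`, `L₂ = G₂ ∩ F₂`, `L₃ = (G₁ ⊕ H₁) ∩ F₂`, `L₄ = H₂ ∩ F₂` inside the plane `F₂`,
computed with respect to any volume form on `F₂` (obtained as `Δ(a∧b) = ω(u,a,b)` for any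
vector `u ∉ F₂`). -/
theorem stmt_15 {F V : Type*} [Field F] [AddCommGroup V] [Module F V]
    (hdim : Module.finrank F V = 3)
    (ω : AlternatingMap F V F (Fin 3))
    (f₁ f₂ g₁ g₂ h₁ h₂ : V)
    (hf : LinearIndependent F ![f₁, f₂])
    (hg : LinearIndependent F ![g₁, g₂])
    (hh : LinearIndependent F ![h₁, h₂])
    (hn1 : ω ![f₁, g₁, g₂] ≠ 0) (hn2 : ω ![g₁, h₁, h₂] ≠ 0) (hn3 : ω ![h₁, f₁, f₂] ≠ 0)
    (hd1 : ω ![f₁, h₁, h₂] ≠ 0) (hd2 : ω ![g₁, f₁, f₂] ≠ 0) (hd3 : ω ![h₁, g₁, g₂] ≠ 0)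
    (l₁ l₂ l₃ l₄ u : V)
    (hl₁ : l₁ ∈ Submodule.span F ({f₁} : Set V))
    (hl₂ : l₂ ∈ Submodule.span F ({g₁, g₂} : Set V) ⊓ Submodule.span F ({f₁, f₂} : Set V))
    (hl₃ : l₃ ∈ (Submodule.span F ({g₁} : Set V) ⊔ Submodule.span F ({h₁} : Set V)) ⊓
      Submodule.span F ({f₁, f₂} : Set V))
    (hl₄ : l₄ ∈ Submodule.span F ({h₁, h₂} : Set V) ⊓ Submodule.span F ({f₁, f₂} : Set V))
    (hl₁0 : l₁ ≠ 0) (hl₂0 : l₂ ≠ 0) (hl₃0 : l₃ ≠ 0) (hl₄0 : l₄ ≠ 0)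
    (hu : u ∉ Submodule.span F ({f₁, f₂} : Set V))
    (hden1 : ω ![u, l₁, l₄] ≠ 0) (hden2 : ω ![u, l₂, l₃] ≠ 0) :
    (ω ![f₁, g₁, g₂] * ω ![g₁, h₁, h₂] * ω ![h₁, f₁, f₂]) /
      (ω ![f₁, h₁, h₂] * ω ![g₁, f₁, f₂] * ω ![h₁, g₁, g₂])
    = (ω ![u, l₁, l₂] * ω ![u, l₃, l₄]) / (ω ![u, l₁, l₄] * ω ![u, l₂, l₃]) := by
  classical
  -- coefficients of the four lines
  obtain ⟨a, ha⟩ := Submodule.mem_span_singleton.mp hl₁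
  have r₁ : a • f₁ + (0:F) • f₂ = l₁ := by rw [zero_smul, add_zero]; exact ha
  obtain ⟨b₁, b₂, rb⟩ := Submodule.mem_span_pair.mp hl₂.1
  obtain ⟨p₂, q₂, r₂f⟩ := Submodule.mem_span_pair.mp hl₂.2
  have hl₃gh : l₃ ∈ Submodule.span F ({g₁, h₁} : Set V) := by
    have hsp : Submodule.span F ({g₁, h₁} : Set V)
        = Submodule.span F ({g₁} : Set V) ⊔ Submodule.span F ({h₁} : Set V) := by
      rw [show ({g₁, h₁} : Set V) = {g₁} ∪ {h₁} from rfl, Submodule.span_union]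
    rw [hsp]; exact hl₃.1
  obtain ⟨c₁, c₂, rc⟩ := Submodule.mem_span_pair.mp hl₃gh
  obtain ⟨p₃, q₃, r₃f⟩ := Submodule.mem_span_pair.mp hl₃.2
  obtain ⟨d₁, d₂, rd⟩ := Submodule.mem_span_pair.mp hl₄.1
  obtain ⟨p₄, q₄, r₄f⟩ := Submodule.mem_span_pair.mp hl₄.2
  -- key: a pair of vectors in F₂ paired with a base vector gives a determinant
  have key : ∀ (α β γ δ : F) (w : V),
      ω ![w, α•f₁+β•f₂, γ•f₁+δ•f₂] = (α*δ - β*γ) * ω ![w, f₁, f₂] := by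
    intro α β γ δ w
    rw [expand3, z12, z12, sw12]; ring
  -- transfer lemma between base points u and w for pairs of vectors in F₂
  have key2 : ∀ (α β γ δ : F) (w : V),
      ω ![u, α•f₁+β•f₂, γ•f₁+δ•f₂] * ω ![w, f₁, f₂]
        = ω ![w, α•f₁+β•f₂, γ•f₁+δ•f₂] * ω ![u, f₁, f₂] := by
    intro α β γ δ w; rw [key, key]; ring
  -- the four pairings computed at convenient base points
  have h12 : ω ![u, l₁, l₂] * ω ![g₁, f₁, f₂]
      = -(a*b₂) * ω ![f₁, g₁, g₂] * ω ![u, f₁, f₂] := by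
    have t := key2 a 0 p₂ q₂ g₁
    rw [r₁, r₂f] at t
    have v : ω ![g₁, l₁, l₂] = -(a*b₂) * ω ![f₁, g₁, g₂] := by
      rw [← r₁, ← rb, expand3, z02, sw01]; ring
    linear_combination t + ω ![u, f₁, f₂] * v
  have h23 : ω ![u, l₂, l₃] * ω ![g₁, f₁, f₂]
      = (b₂*c₂) * ω ![h₁, g₁, g₂] * ω ![u, f₁, f₂] := by
    have t := key2 p₂ q₂ p₃ q₃ g₁
    rw [r₂f, r₃f] at t
    have cyc : ω ![g₁, g₂, h₁] = ω ![h₁, g₁, g₂] := by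
      rw [sw12 ω g₁ h₁ g₂, sw01 ω h₁ g₁ g₂, neg_neg]
    have v : ω ![g₁, l₂, l₃] = (b₂*c₂) * ω ![h₁, g₁, g₂] := by
      rw [← rb, ← rc, expand3, z01, z01, z02, cyc]; ring
    linear_combination t + ω ![u, f₁, f₂] * v
  have h34 : ω ![u, l₃, l₄] * ω ![h₁, f₁, f₂]
      = -(c₁*d₂) * ω ![g₁, h₁, h₂] * ω ![u, f₁, f₂] := by
    have t := key2 p₃ q₃ p₄ q₄ h₁
    rw [r₃f, r₄f] at t
    have v : ω ![h₁, l₃, l₄] = -(c₁*d₂) * ω ![g₁, h₁, h₂] := by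
      rw [← rc, ← rd, expand3, z02, z01, z01, sw01]; ring
    linear_combination t + ω ![u, f₁, f₂] * v
  have h14 : ω ![u, l₁, l₄] * ω ![h₁, f₁, f₂]
      = -(a*d₂) * ω ![f₁, h₁, h₂] * ω ![u, f₁, f₂] := by
    have t := key2 a 0 p₄ q₄ h₁
    rw [r₁, r₄f] at t
    have v : ω ![h₁, l₁, l₄] = -(a*d₂) * ω ![f₁, h₁, h₂] := by
      rw [← r₁, ← rd, expand3, z02, sw01]; ring
    linear_combination t + ω ![u, f₁, f₂] * v
  -- the linear relation coming from l₃ ∈ F₂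
  have rel : c₁ * ω ![g₁, f₁, f₂] + c₂ * ω ![h₁, f₁, f₂] = 0 := by
    have t1 : ω ![l₃, f₁, f₂] = c₁ * ω ![g₁, f₁, f₂] + c₂ * ω ![h₁, f₁, f₂] := by
      rw [← rc, lin0]
    have t2 : ω ![l₃, f₁, f₂] = 0 := by
      rw [← r₃f, lin0, z01, z02]; ring
    linear_combination t2 - t1
  -- cross-multiplied products
  have P1 : ω ![u, l₁, l₄] * ω ![u, l₂, l₃] * (ω ![h₁, f₁, f₂] * ω ![g₁, f₁, f₂])
      = (-(a*d₂) * ω ![f₁, h₁, h₂] * ω ![u, f₁, f₂])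
        * ((b₂*c₂) * ω ![h₁, g₁, g₂] * ω ![u, f₁, f₂]) := by
    linear_combination (ω ![u, l₂, l₃] * ω ![g₁, f₁, f₂]) * h14
      + (-(a*d₂) * ω ![f₁, h₁, h₂] * ω ![u, f₁, f₂]) * h23
  have P2 : ω ![u, l₁, l₂] * ω ![u, l₃, l₄] * (ω ![g₁, f₁, f₂] * ω ![h₁, f₁, f₂])
      = (-(a*b₂) * ω ![f₁, g₁, g₂] * ω ![u, f₁, f₂])
        * (-(c₁*d₂) * ω ![g₁, h₁, h₂] * ω ![u, f₁, f₂]) := by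
    linear_combination (ω ![u, l₃, l₄] * ω ![h₁, f₁, f₂]) * h12
      + (-(a*b₂) * ω ![f₁, g₁, g₂] * ω ![u, f₁, f₂]) * h34
  -- conclude
  rw [div_eq_div_iff (mul_ne_zero (mul_ne_zero hd1 hd2) hd3) (mul_ne_zero hden1 hden2)]
  apply mul_right_cancel₀ (mul_ne_zero hn3 hd2)
  linear_combination (ω ![f₁, g₁, g₂] * ω ![g₁, h₁, h₂] * ω ![h₁, f₁, f₂]) * P1
    - (ω ![f₁, h₁, h₂] * ω ![g₁, f₁, f₂] * ω ![h₁, g₁, g₂]) * P2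
    - (a * b₂ * d₂ * ω ![f₁, g₁, g₂] * ω ![g₁, h₁, h₂] * ω ![f₁, h₁, h₂]
        * ω ![h₁, g₁, g₂] * ω ![u, f₁, f₂] * ω ![u, f₁, f₂]) * rel
end
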